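/- Let p be a 132-avoiding permutation of length n and let R(p) = r(p_1) r(p_2) ... r(p_n) be its rank sequence. Then R(p) is a sequence of positive integers satisfying r(p_i) − r(p_{i+1}) ≤ 1 for all 1 ≤ i ≤ n−1 and r(p_n) = 1; that is, R(p) lies in S_n. -/

import Mathlib

/-- `s` is (the position set of) an increasing subsequence of the permutation `p`. -/
def IncSubseq {n : ℕ} (p : Equiv.Perm (Fin n)) (s : Finset (Fin n)) : Prop :=
  ∀ a ∈ s, ∀ b ∈ s, a < b → p a < p b

/-- `p` avoids the pattern 132. -/
def Avoids132 {n : ℕ} (p : Equiv.Perm (Fin n)) : Prop :=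
  ¬ ∃ i j k : Fin n, i < j ∧ j < k ∧ p i < p k ∧ p k < p j

/-- The subsequence with position set `s` begins at position `i`. -/
def BeginsAt {n : ℕ} (s : Finset (Fin n)) (i : Fin n) : Prop :=
  i ∈ s ∧ ∀ a ∈ s, i ≤ a

/-- The rank of the entry at position `i`: the maximal length of an increasing
subsequence of `p` beginning at position `i`. -/
noncomputable def rank {n : ℕ} (p : Equiv.Perm (Fin n)) (i : Fin n) : ℕ :=
  sSup {k : ℕ | ∃ s : Finset (Fin n), IncSubseq p s ∧ BeginsAt s i ∧ s.card = k}

/-- Membership in `S n`: positive entries, consecutive decreases by at most 1,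
and the last entry equals 1. -/
def InSn (n : ℕ) (t : Fin n → ℕ) : Prop :=
  (∀ i, 1 ≤ t i) ∧
  (∀ i : ℕ, (h : i + 1 < n) → t ⟨i, Nat.lt_of_succ_lt h⟩ ≤ t ⟨i + 1, h⟩ + 1) ∧
  (∀ h : 0 < n, t ⟨n - 1, Nat.sub_lt h Nat.one_pos⟩ = 1)

/-- `p` has a unique longest increasing subsequence. -/
def HasULIS {n : ℕ} (p : Equiv.Perm (Fin n)) : Prop :=
  ∃! s : Finset (Fin n), IncSubseq p s ∧
    ∀ t : Finset (Fin n), IncSubseq p t → t.card ≤ s.card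

lemma rank_bdd {n : ℕ} (p : Equiv.Perm (Fin n)) (i : Fin n) :
    BddAbove {k : ℕ | ∃ s : Finset (Fin n), IncSubseq p s ∧ BeginsAt s i ∧ s.card = k} := by
  refine ⟨n, fun k hk => ?_⟩
  obtain ⟨s, _, _, rfl⟩ := hk
  simpa using Finset.card_le_univ s

lemma one_mem_rankSet {n : ℕ} (p : Equiv.Perm (Fin n)) (i : Fin n) :
    1 ∈ {k : ℕ | ∃ s : Finset (Fin n), IncSubseq p s ∧ BeginsAt s i ∧ s.card = k} := by
  refine ⟨{i}, ?_, ⟨Finset.mem_singleton_self i, ?_⟩, Finset.card_singleton i⟩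
  · intro a ha b hb hab
    rw [Finset.mem_singleton] at ha hb
    subst ha; subst hb; exact absurd hab (lt_irrefl _)
  · intro a ha; rw [Finset.mem_singleton] at ha; subst ha; exact le_refl _

lemma rank_ge_one {n : ℕ} (p : Equiv.Perm (Fin n)) (i : Fin n) : 1 ≤ rank p i :=
  le_csSup (rank_bdd p i) (one_mem_rankSet p i)

lemma rank_mem {n : ℕ} (p : Equiv.Perm (Fin n)) (i : Fin n) :
    rank p i ∈ {k : ℕ | ∃ s : Finset (Fin n), IncSubseq p s ∧ BeginsAt s i ∧ s.card = k} :=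
  Nat.sSup_mem ⟨1, one_mem_rankSet p i⟩ (rank_bdd p i)

theorem rank_seq_mem_Sn (n : ℕ) (hn : 0 < n) (p : Equiv.Perm (Fin n))
    (hp : Avoids132 p) :
    (∀ i : Fin n, 1 ≤ rank p i) ∧
    (∀ i : ℕ, (h : i + 1 < n) →
      rank p ⟨i, Nat.lt_of_succ_lt h⟩ ≤ rank p ⟨i + 1, h⟩ + 1) ∧
    rank p ⟨n - 1, Nat.sub_lt hn Nat.one_pos⟩ = 1 := by
  refine ⟨fun i => rank_ge_one p i, ?_, ?_⟩
  · intro i h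
    set i' : Fin n := ⟨i, Nat.lt_of_succ_lt h⟩ with hi'
    set i1 : Fin n := ⟨i + 1, h⟩ with hi1
    obtain ⟨s, hs, ⟨his, hbeg⟩, hcard⟩ := rank_mem p i'
    by_cases hk : rank p i' ≤ 1
    · exact hk.trans (by omega)
    push_neg at hk
    have hc2 : 2 ≤ s.card := by omega
    have ht : (s.erase i').Nonempty := by
      rw [← Finset.card_pos, Finset.card_erase_of_mem his]; omega
    set j : Fin n := (s.erase i').min' ht with hj
    have hjmem : j ∈ s.erase i' := Finset.min'_mem _ ht
    have hjs : j ∈ s := Finset.mem_of_mem_erase hjmem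
    have hjne : j ≠ i' := Finset.ne_of_mem_erase hjmem
    have hij : i' < j := lt_of_le_of_ne (hbeg j hjs) (Ne.symm hjne)
    have hi1j : i1 ≤ j := by
      rw [Fin.le_def]; rw [Fin.lt_def] at hij; exact hij
    have hinc_erase : IncSubseq p (s.erase i') := fun a ha b hb hab =>
      hs a (Finset.mem_of_mem_erase ha) b (Finset.mem_of_mem_erase hb) hab
    rcases eq_or_lt_of_le hi1j with heq | hlt
    · -- j = i1 : the erased set begins at i1
      have hmem : s.card - 1 ∈ {k : ℕ | ∃ t : Finset (Fin n),
          IncSubseq p t ∧ BeginsAt t i1 ∧ t.card = k} := by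
        refine ⟨s.erase i', hinc_erase, ⟨heq ▸ hjmem, ?_⟩, ?_⟩
        · intro a ha; exact heq ▸ Finset.min'_le _ a ha
        · rw [Finset.card_erase_of_mem his]
      have h2 : s.card - 1 ≤ rank p i1 := le_csSup (rank_bdd p i1) hmem
      omega
    · -- i1 < j
      have hpij : p i' < p j := hs i' his j hjs hij
      by_cases hpc : p i1 < p j
      · have hi1nt : i1 ∉ s.erase i' := fun hmem =>
          absurd (Finset.min'_le _ i1 hmem) (not_le_of_gt hlt)
        have hmem : s.card ∈ {k : ℕ | ∃ t : Finset (Fin n),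
            IncSubseq p t ∧ BeginsAt t i1 ∧ t.card = k} := by
          refine ⟨insert i1 (s.erase i'), ?_, ⟨Finset.mem_insert_self _ _, ?_⟩, ?_⟩
          · intro a ha b hb hab
            rcases Finset.mem_insert.mp ha with rfl | ha'
            · rcases Finset.mem_insert.mp hb with rfl | hb'
              · exact absurd hab (lt_irrefl _)
              · rcases eq_or_lt_of_le (Finset.min'_le _ b hb') with hjb | hjb
                · rw [← hjb]; exact hpc
                · exact hpc.trans (hinc_erase j hjmem b hb' hjb)
            · rcases Finset.mem_insert.mp hb with rfl | hb'
              · exact absurd (hlt.trans_le (Finset.min'_le _ a ha')) (not_lt_of_gt hab)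
              · exact hinc_erase a ha' b hb' hab
          · intro a ha
            rcases Finset.mem_insert.mp ha with rfl | ha'
            · exact le_refl _
            · exact (le_of_lt hlt).trans (Finset.min'_le _ a ha')
          · rw [Finset.card_insert_of_notMem hi1nt, Finset.card_erase_of_mem his]
            omega
        have h2 : s.card ≤ rank p i1 := le_csSup (rank_bdd p i1) hmem
        omega
      · push_neg at hpc
        have hne : p j ≠ p i1 := fun hpe =>
          (ne_of_lt hlt) (p.injective hpe).symm
        have hpji : p j < p i1 := lt_of_le_of_ne hpc hne
        exact absurd ⟨i', i1, j, by rw [Fin.lt_def]; exact Nat.lt_succ_self i, hlt, hpij, hpji⟩ hp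
  · -- last entry
    set l : Fin n := ⟨n - 1, Nat.sub_lt hn Nat.one_pos⟩ with hl
    refine le_antisymm ?_ (rank_ge_one p l)
    refine csSup_le ⟨1, one_mem_rankSet p l⟩ ?_
    rintro k ⟨s, _, ⟨hls, hbeg⟩, rfl⟩
    have hsub : s ⊆ {l} := by
      intro a ha
      rw [Finset.mem_singleton]
      have h1 : l ≤ a := hbeg a ha
      have h2 : a ≤ l := by
        rw [Fin.le_def]; simp only [hl]
        omega
      exact le_antisymm h2 h1
    calc s.card ≤ ({l} : Finset (Fin n)).card := Finset.card_le_card hsub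
    _ = 1 := Finset.card_singleton l
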